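/- Let A be a category of presheaves of sets on a small category 𝒜, and let M(A) := Fun(∫A, Set) for A a presheaf, where ∫A is the category of elements. For a morphism a : A₁ → A₀ of presheaves, a^* : M(A₀) → M(A₁) is precomposition with the induced functor ∫A₁ → ∫A₀, and a_* is its left adjoint (left Kan extension). Then for any Cartesian square of presheaves A₂ = A₁ ×_{A₀} A₁ with projections a₁, a₂ : A₂ → A₁, the base change natural transformation χ : (a₂)_* ∘ a₁^* ⟹ a^* ∘ a_* is a natural isomorphism (Beck–Chevalley condition). -/

import Mathlib

open CategoryTheory CategoryTheory.Limits

universe u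

/-- Pullback functor `M(B) ⥤ M(A)` (precomposition with the induced functor on
categories of elements) for a morphism `α : A ⟶ B` of presheaves of sets,
where `M(A) := Fun(∫A, Set)`. -/
def elementsPullback {𝒜 : Type u} [SmallCategory 𝒜] {A B : 𝒜ᵒᵖ ⥤ Type u} (α : A ⟶ B) :
    (B.Elements ⥤ Type u) ⥤ (A.Elements ⥤ Type u) :=
  (Functor.whiskeringLeft _ _ _).obj (CategoryOfElements.map α)

namespace BCAux

/-! ### Generic base change morphisms and their transport along uniqueness of adjoints -/

section Generic

variable {C D E : Type*} [Category C] [Category D] [Category E]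
  {F : C ⥤ D} {P G : D ⥤ E}

/-- The base change ("Beck–Chevalley") morphism. -/
def chi (e : F ⋙ P = F ⋙ G) {L : D ⥤ C} (adj : L ⊣ F) {K : E ⥤ D} (adjK : K ⊣ G) (M : D) :
    K.obj (P.obj M) ⟶ F.obj (L.obj M) :=
  K.map (P.map (adj.unit.app M) ≫ eqToHom (Functor.congr_obj e (L.obj M))) ≫
    adjK.counit.app (F.obj (L.obj M))

lemma chi_conj (e : F ⋙ P = F ⋙ G) {L L' : D ⥤ C} (adj : L ⊣ F) (adj' : L' ⊣ F)
    {K K' : E ⥤ D} (adjK : K ⊣ G) (adjK' : K' ⊣ G) (M : D) :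
    chi e adj' adjK' M =
      (Adjunction.leftAdjointUniq adjK' adjK).hom.app (P.obj M) ≫ chi e adj adjK M ≫
        F.map ((Adjunction.leftAdjointUniq adj adj').hom.app M) := by
  have hswap : eqToHom (Functor.congr_obj e (L.obj M)) ≫
      G.map (F.map ((Adjunction.leftAdjointUniq adj adj').hom.app M)) =
      P.map (F.map ((Adjunction.leftAdjointUniq adj adj').hom.app M)) ≫
        eqToHom (Functor.congr_obj e (L'.obj M)) := by
    have h := Functor.congr_hom e ((Adjunction.leftAdjointUniq adj adj').hom.app M)
    simp only [Functor.comp_map] at h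
    rw [h]
    simp
  have hg : (P.map (adj.unit.app M) ≫ eqToHom (Functor.congr_obj e (L.obj M))) ≫
      G.map (F.map ((Adjunction.leftAdjointUniq adj adj').hom.app M)) =
      P.map (adj'.unit.app M) ≫ eqToHom (Functor.congr_obj e (L'.obj M)) := by
    rw [Category.assoc, hswap, ← Category.assoc, ← P.map_comp,
      Adjunction.unit_leftAdjointUniq_hom_app]
  have hnat := adjK.counit.naturality (F.map ((Adjunction.leftAdjointUniq adj adj').hom.app M))
  simp only [Functor.comp_map, Functor.id_map] at hnat
  refine Eq.symm ?_
  calc (Adjunction.leftAdjointUniq adjK' adjK).hom.app (P.obj M) ≫ chi e adj adjK M ≫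
        F.map ((Adjunction.leftAdjointUniq adj adj').hom.app M)
      = (Adjunction.leftAdjointUniq adjK' adjK).hom.app (P.obj M) ≫
          K.map (P.map (adj.unit.app M) ≫ eqToHom (Functor.congr_obj e (L.obj M))) ≫
          (adjK.counit.app (F.obj (L.obj M)) ≫
            F.map ((Adjunction.leftAdjointUniq adj adj').hom.app M)) := by
        rw [chi]; simp only [Category.assoc]
    _ = (Adjunction.leftAdjointUniq adjK' adjK).hom.app (P.obj M) ≫
          K.map (P.map (adj.unit.app M) ≫ eqToHom (Functor.congr_obj e (L.obj M))) ≫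
          (K.map (G.map (F.map ((Adjunction.leftAdjointUniq adj adj').hom.app M))) ≫
            adjK.counit.app (F.obj (L'.obj M))) := by rw [← hnat]
    _ = (Adjunction.leftAdjointUniq adjK' adjK).hom.app (P.obj M) ≫
          K.map (P.map (adj'.unit.app M) ≫ eqToHom (Functor.congr_obj e (L'.obj M))) ≫
          adjK.counit.app (F.obj (L'.obj M)) := by
        rw [← Category.assoc (K.map _), ← K.map_comp, hg]
    _ = ((Adjunction.leftAdjointUniq adjK' adjK).hom.app (P.obj M) ≫
          K.map (P.map (adj'.unit.app M) ≫ eqToHom (Functor.congr_obj e (L'.obj M)))) ≫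
          adjK.counit.app (F.obj (L'.obj M)) := by rw [Category.assoc]
    _ = (K'.map (P.map (adj'.unit.app M) ≫ eqToHom (Functor.congr_obj e (L'.obj M))) ≫
          (Adjunction.leftAdjointUniq adjK' adjK).hom.app
            (G.obj (F.obj (L'.obj M)))) ≫
          adjK.counit.app (F.obj (L'.obj M)) := by
        exact congrArg (· ≫ adjK.counit.app (F.obj (L'.obj M)))
          ((Adjunction.leftAdjointUniq adjK' adjK).hom.naturality _).symm
    _ = K'.map (P.map (adj'.unit.app M) ≫ eqToHom (Functor.congr_obj e (L'.obj M))) ≫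
          ((Adjunction.leftAdjointUniq adjK' adjK).hom.app (G.obj (F.obj (L'.obj M))) ≫
            adjK.counit.app (F.obj (L'.obj M))) := by rw [Category.assoc]
    _ = K'.map (P.map (adj'.unit.app M) ≫ eqToHom (Functor.congr_obj e (L'.obj M))) ≫
          adjK'.counit.app (F.obj (L'.obj M)) := by
        rw [Adjunction.leftAdjointUniq_hom_app_counit]
    _ = chi e adj' adjK' M := rfl

lemma isIso_chi_transport (e : F ⋙ P = F ⋙ G) {L L' : D ⥤ C} (adj : L ⊣ F) (adj' : L' ⊣ F)
    {K K' : E ⥤ D} (adjK : K ⊣ G) (adjK' : K' ⊣ G) (M : D)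
    (h : IsIso (chi e adj adjK M)) : IsIso (chi e adj' adjK' M) := by
  rw [chi_conj e adj adj' adjK adjK' M]
  have : IsIso (F.map ((Adjunction.leftAdjointUniq adj adj').hom.app M)) := by
    infer_instance
  infer_instance

end Generic

/-! ### The explicit fiberwise left adjoint to `elementsPullback` -/

theorem sigma_ext {α : Type u} {g : α → Type u} {x y : Σ a : α, g a}
    (h1 : x.1 = y.1) (h2 : HEq x.2 y.2) : x = y := by
  obtain ⟨a, b⟩ := x
  obtain ⟨c, d⟩ := y
  cases h1
  cases h2
  rfl

section Elements

variable {𝒜 : Type u} [SmallCategory 𝒜] {B C : 𝒜ᵒᵖ ⥤ Type u}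

theorem map_heq₂ (M : B.Elements ⥤ Type u) {el : B.Elements} {X : 𝒜ᵒᵖ} {b b' : B.obj X}
    (h : b = b') (f : el ⟶ B.elementsMk X b) (g : el ⟶ B.elementsMk X b')
    (hv : f.val = g.val) (m : M.obj el) : HEq (M.map f m) (M.map g m) := by
  subst h
  obtain rfl : f = g := Subtype.ext hv
  rfl

theorem map_heq_id (M : B.Elements ⥤ Type u) {X : 𝒜ᵒᵖ} {b b' : B.obj X} (h : b' = b)
    (f : B.elementsMk X b ⟶ B.elementsMk X b') (hv : f.val = 𝟙 X) (m : M.obj (B.elementsMk X b)) :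
    HEq (M.map f m) m := by
  subst h
  obtain rfl : f = 𝟙 _ := Subtype.ext hv
  exact heq_of_eq (FunctorToTypes.map_id_apply M m)

variable (β : B ⟶ C)

/-- Explicit left Kan extension along `CategoryOfElements.map β`, given by coproducts
over the (discrete) fibers. -/
def LanObj (M : B.Elements ⥤ Type u) : C.Elements ⥤ Type u where
  obj Z := Σ b : {b : B.obj Z.1 // β.app Z.1 b = Z.2}, M.obj (B.elementsMk Z.1 b.1)
  map {Z W} f := TypeCat.ofHom fun x =>
    ⟨⟨B.map f.val x.1.1, by
        rw [FunctorToTypes.naturality β f.val, x.1.2]; exact f.2⟩,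
      M.map (⟨f.val, rfl⟩ : B.elementsMk Z.1 x.1.1 ⟶ B.elementsMk W.1 (B.map f.val x.1.1)) x.2⟩
  map_id Z := by
    refine ConcreteCategory.hom_ext _ _ fun x => ?_
    obtain ⟨⟨b, hb⟩, m⟩ := x
    exact sigma_ext (Subtype.ext (FunctorToTypes.map_id_apply B b))
      (map_heq_id M (FunctorToTypes.map_id_apply B b) _ rfl m)
  map_comp {Z W V} f g := by
    refine ConcreteCategory.hom_ext _ _ fun x => ?_
    obtain ⟨⟨b, hb⟩, m⟩ := x
    have h1 : B.map (f ≫ g).val b = B.map g.val (B.map f.val b) :=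
      FunctorToTypes.map_comp_apply B f.val g.val b
    refine sigma_ext (Subtype.ext h1) ?_
    refine HEq.trans (map_heq₂ M h1 _
      ((⟨f.val, rfl⟩ : B.elementsMk Z.1 b ⟶ B.elementsMk W.1 (B.map f.val b)) ≫
        (⟨g.val, rfl⟩ : B.elementsMk W.1 (B.map f.val b) ⟶
          B.elementsMk V.1 (B.map g.val (B.map f.val b))))
      rfl m) ?_
    exact heq_of_eq (FunctorToTypes.map_comp_apply M _ _ m)

/-- The explicit left adjoint to `elementsPullback β`. -/
def fiberLan : (B.Elements ⥤ Type u) ⥤ (C.Elements ⥤ Type u) where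
  obj := LanObj β
  map {M M'} φ :=
    { app := fun Z => TypeCat.ofHom fun x => ⟨x.1, φ.app (B.elementsMk Z.1 x.1.1) x.2⟩
      naturality := fun Z W f => by
        refine ConcreteCategory.hom_ext _ _ fun x => ?_
        obtain ⟨⟨b, hb⟩, m⟩ := x
        exact congrArg (Sigma.mk _) (FunctorToTypes.naturality φ _ m) }
  map_id M := by
    apply NatTrans.ext
    funext Z; refine ConcreteCategory.hom_ext _ _ fun x => ?_
    rfl
  map_comp φ ψ := by
    apply NatTrans.ext
    funext Z; refine ConcreteCategory.hom_ext _ _ fun x => ?_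
    rfl

/-- The explicit adjunction `fiberLan β ⊣ elementsPullback β`. -/
def fiberAdj : fiberLan β ⊣ elementsPullback β where
  unit :=
    { app := fun M =>
        { app := fun el => TypeCat.ofHom fun m => ⟨⟨el.2, rfl⟩, m⟩
          naturality := fun el el' f => by
            refine ConcreteCategory.hom_ext _ _ fun m => ?_
            exact sigma_ext (Subtype.ext f.2.symm)
              (map_heq₂ M f.2.symm f ⟨f.val, rfl⟩ rfl m) }
      naturality := fun M M' φ => by
        apply NatTrans.ext
        funext el; refine ConcreteCategory.hom_ext _ _ fun m => ?_
        rfl }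
  counit :=
    { app := fun N =>
        { app := fun Z => TypeCat.ofHom fun x =>
            N.map (⟨𝟙 Z.1, by rw [FunctorToTypes.map_id_apply]; exact x.1.2⟩ :
              C.elementsMk Z.1 (β.app Z.1 x.1.1) ⟶ Z) x.2
          naturality := fun Z W f => by
            refine ConcreteCategory.hom_ext _ _ fun x => ?_
            obtain ⟨⟨b, hb⟩, n⟩ := x
            show N.map _ (N.map ((CategoryOfElements.map β).map
                (⟨f.val, rfl⟩ : B.elementsMk Z.1 b ⟶ B.elementsMk W.1 (B.map f.val b))) n) =
              N.map f (N.map _ n)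
            refine (FunctorToTypes.map_comp_apply N _ _ n).symm.trans
              (Eq.trans ?_ (FunctorToTypes.map_comp_apply N _ _ n))
            exact congrArg (fun h => N.map h n) (Subtype.ext
              ((Category.comp_id f.val).trans (Category.id_comp f.val).symm)) }
      naturality := fun N N' ψ => by
        apply NatTrans.ext
        funext Z; refine ConcreteCategory.hom_ext _ _ fun x => ?_
        exact (FunctorToTypes.naturality ψ _ _).symm }
  left_triangle_components M := by
    apply NatTrans.ext
    funext Z; refine ConcreteCategory.hom_ext _ _ fun x => ?_
    obtain ⟨⟨b, hb⟩, m⟩ := x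
    exact sigma_ext (Subtype.ext (FunctorToTypes.map_id_apply B b))
      (map_heq_id M (FunctorToTypes.map_id_apply B b) _ rfl m)
  right_triangle_components N := by
    apply NatTrans.ext
    funext el; refine ConcreteCategory.hom_ext _ _ fun n => ?_
    exact (congrArg (fun h => N.map h n)
      (Subtype.ext (rfl : (𝟙 el.1 : _) = 𝟙 el.1))).trans
      (FunctorToTypes.map_id_apply N n)

theorem eqToHom_lanObj (M : B.Elements ⥤ Type u) {X : 𝒜ᵒᵖ} {c c' : C.obj X}
    (hcc : c = c')
    (hT : (LanObj β M).obj (C.elementsMk X c) = (LanObj β M).obj (C.elementsMk X c'))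
    (b : B.obj X) (hb : β.app X b = c) (m : M.obj (B.elementsMk X b)) :
    eqToHom hT ⟨⟨b, hb⟩, m⟩ = ⟨⟨b, hb.trans hcc⟩, m⟩ := by
  subst hcc
  rfl

theorem lanObj_map_fiber (M : B.Elements ⥤ Type u) {X : 𝒜ᵒᵖ} {c c' : C.obj X} (hcc : c = c')
    (f : C.elementsMk X c ⟶ C.elementsMk X c') (hf : f.val = 𝟙 X)
    (b : B.obj X) (hb : β.app X b = c) (m : M.obj (B.elementsMk X b)) :
    (LanObj β M).map f ⟨⟨b, hb⟩, m⟩ = ⟨⟨b, hb.trans hcc⟩, m⟩ := by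
  subst hcc
  obtain rfl : f = 𝟙 _ := Subtype.ext hf
  exact FunctorToTypes.map_id_apply (LanObj β M) _

end Elements

end BCAux

/-- **Beck–Chevalley for presheaves of sets.** Let `𝒜` be a small category, `a : A₁ ⟶ A₀`
a morphism of presheaves of sets on `𝒜`, `A₂ = A₁ ×_{A₀} A₁` with projections `a₁, a₂`, and
`M(A) = Fun(∫A, Set)` with pullbacks `a^*` given by precomposition. For any left adjoints
`a_* ⊣ a^*` and `(a₂)_* ⊣ a₂^*`, the base change transformation
`χ : (a₂)_* ∘ a₁^* ⟹ a^* ∘ a_*` is a natural isomorphism (all its components are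
isomorphisms). -/
theorem beck_chevalley_for_presheaves
    {𝒜 : Type u} [SmallCategory 𝒜] {A₀ A₁ : 𝒜ᵒᵖ ⥤ Type u} (a : A₁ ⟶ A₀)
    (alow : (A₁.Elements ⥤ Type u) ⥤ (A₀.Elements ⥤ Type u))
    (adj : alow ⊣ elementsPullback a)
    (a2low : ((pullback a a).Elements ⥤ Type u) ⥤ (A₁.Elements ⥤ Type u))
    (adj2 : a2low ⊣ elementsPullback (pullback.snd a a))
    (M : A₁.Elements ⥤ Type u) :
    IsIso
      (a2low.map ((elementsPullback (pullback.fst a a)).map (adj.unit.app M)) ≫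
       a2low.map (eqToHom (Functor.congr_obj
         (show elementsPullback a ⋙ elementsPullback (pullback.fst a a)
             = elementsPullback a ⋙ elementsPullback (pullback.snd a a) from
           congrArg (Functor.whiskeringLeft _ _ _).obj
             (congrArg CategoryOfElements.map pullback.condition))
         (alow.obj M))) ≫
       adj2.counit.app ((elementsPullback a).obj (alow.obj M))) := by
  have e : elementsPullback a ⋙ elementsPullback (pullback.fst a a)
      = elementsPullback a ⋙ elementsPullback (pullback.snd a a) :=
    congrArg (Functor.whiskeringLeft _ _ _).obj (congrArg CategoryOfElements.map pullback.condition)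
  -- The explicit base change map is an isomorphism, by a pointwise computation.
  have hexp : IsIso (BCAux.chi e (BCAux.fiberAdj a) (BCAux.fiberAdj (pullback.snd a a)) M) := by
    have : ∀ (z : A₁.Elements),
        IsIso ((BCAux.chi e (BCAux.fiberAdj a) (BCAux.fiberAdj (pullback.snd a a)) M).app z) := by
      intro z
      obtain ⟨X, x₁⟩ := z
      rw [isIso_iff_bijective]
      have hpb := (IsPullback.of_hasPullback a a).map ((evaluation 𝒜ᵒᵖ (Type u)).obj X)
      have hcond : ∀ w : (pullback a a).obj X,
          a.app X ((pullback.fst a a).app X w) = a.app X ((pullback.snd a a).app X w) :=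
        fun w => congrArg (fun (t : pullback a a ⟶ A₀) => t.app X w)
          (pullback.condition (f := a) (g := a))
      -- the component of `chi` computes to the obvious reindexing map
      have happ : ∀ (w : (pullback a a).obj X) (hw : (pullback.snd a a).app X w = x₁)
          (m : M.obj (A₁.elementsMk X ((pullback.fst a a).app X w))),
          (BCAux.chi e (BCAux.fiberAdj a) (BCAux.fiberAdj (pullback.snd a a)) M).app
              (⟨X, x₁⟩ : A₁.Elements) ⟨⟨w, hw⟩, m⟩ =
            ⟨⟨(pullback.fst a a).app X w, (hcond w).trans (congrArg (a.app X) hw)⟩, m⟩ := by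
        intro w hw m
        show (BCAux.LanObj a M).map ((CategoryOfElements.map a).map
              (⟨𝟙 X, by rw [FunctorToTypes.map_id_apply]; exact hw⟩ :
                A₁.elementsMk X ((pullback.snd a a).app X w) ⟶ (⟨X, x₁⟩ : A₁.Elements)))
            ((eqToHom (Functor.congr_obj e ((BCAux.fiberLan a).obj M))).app
              ((pullback a a).elementsMk X w)
              ⟨⟨(pullback.fst a a).app X w, rfl⟩, m⟩) = _
        refine Eq.trans (congrArg ((BCAux.LanObj a M).map _)
          (Eq.trans (ConcreteCategory.congr_hom (eqToHom_app _ _) _)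
            (BCAux.eqToHom_lanObj a M (hcond w) _ _ rfl m))) ?_
        exact BCAux.lanObj_map_fiber a M (congrArg (a.app X) hw) _ rfl _ _ m
      constructor
      · rintro ⟨⟨w, hw⟩, m⟩ ⟨⟨w', hw'⟩, m'⟩ huv
        rw [happ w hw m, happ w' hw' m'] at huv
        have h1 : (pullback.fst a a).app X w = (pullback.fst a a).app X w' :=
          congrArg (fun t => t.1.1) huv
        have h2 : w = w' :=
          PullbackCone.IsLimit.type_ext hpb.isLimit h1 (hw.trans hw'.symm)
        subst h2
        injection huv with h4 h5
        subst h5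
        rfl
      · rintro ⟨⟨x, hx⟩, m⟩
        obtain ⟨w, hw1, hw2⟩ : ∃ w : (pullback a a).obj X,
            (pullback.fst a a).app X w = x ∧ (pullback.snd a a).app X w = x₁ := by
          refine ⟨(PullbackCone.IsLimit.equivPullbackObj hpb.isLimit).symm ⟨(x, x₁), hx⟩, ?_, ?_⟩
          · exact PullbackCone.IsLimit.equivPullbackObj_symm_apply_fst hpb.isLimit _
          · exact PullbackCone.IsLimit.equivPullbackObj_symm_apply_snd hpb.isLimit _
        subst hw1
        exact ⟨⟨⟨w, hw2⟩, m⟩, happ w hw2 m⟩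
    exact NatIso.isIso_of_isIso_app _
  have h := BCAux.isIso_chi_transport e (BCAux.fiberAdj a) adj
    (BCAux.fiberAdj (pullback.snd a a)) adj2 M hexp
  have heq : BCAux.chi e adj adj2 M =
      a2low.map ((elementsPullback (pullback.fst a a)).map (adj.unit.app M)) ≫
       a2low.map (eqToHom (Functor.congr_obj
         (show elementsPullback a ⋙ elementsPullback (pullback.fst a a)
             = elementsPullback a ⋙ elementsPullback (pullback.snd a a) from
           congrArg (Functor.whiskeringLeft _ _ _).obj
             (congrArg CategoryOfElements.map pullback.condition))
         (alow.obj M))) ≫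
       adj2.counit.app ((elementsPullback a).obj (alow.obj M)) := by
    rw [BCAux.chi, Functor.map_comp, Category.assoc]
  rwa [heq] at h
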